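/- Let $X$ be a degree $d$ hypersurface in $\mathbb{P}^n$ defined by a homogeneous polynomial $f$. Suppose $f$ is GIT semistable in the sense of the Hilbert–Mumford criterion: for every weight vector $w \in \mathbf{Q}^{n+1}$ and every $g \in SL(n+1)$, $\mathrm{wt}_w(f \circ g) \leq \frac{d}{n+1}\sum_i w_i$, where $\mathrm{wt}_w(h) = \min\{\langle w, \alpha\rangle : \text{the monomial } x^\alpha \text{ appears in } h\}$. Then for any weights $(w_1,\ldots,w_d,v_0,\ldots,v_{m+1})$ the polynomial $F(y,x) = y_1\cdots y_d + f(x)$, after conjugation by block-diagonal matrices $\mathrm{diag}(\Lambda, g)$ with $\Lambda$ diagonal, satisfies $\mathrm{wt}_{(w,v)}(F\circ\widetilde{g}) = \min\{\sum_{i=1}^d w_i, \mathrm{wt}_v(f\circ g)\} \leq \frac{d}{m+d+2}\left(\sum_i w_i + \sum_j v_j\right)$, where $n = m+1$. -/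

import Mathlib

open MvPolynomial

def wt {σ : Type*} (w : σ → ℚ) (h : MvPolynomial σ ℂ) : WithTop ℚ :=
  h.support.inf fun α => ((∑ i ∈ α.support, w i * (α i : ℚ) : ℚ) : WithTop ℚ)

lemma wt_monomial {σ : Type*} (ν : σ → ℚ) (α : σ →₀ ℕ) {a : ℂ} (ha : a ≠ 0) :
    wt ν (MvPolynomial.monomial α a)
      = ((∑ i ∈ α.support, ν i * (α i : ℚ) : ℚ) : WithTop ℚ) := by
  classical
  rw [wt, MvPolynomial.support_monomial, if_neg ha, Finset.inf_singleton]

lemma wt_smul {σ : Type*} (ν : σ → ℚ) {c : ℂ} (hc : c ≠ 0) (p : MvPolynomial σ ℂ) :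
    wt ν (c • p) = wt ν p := by
  rw [wt, wt, MvPolynomial.support_smul_eq hc]

lemma wt_add_of_disjoint {σ : Type*} (ν : σ → ℚ) {p q : MvPolynomial σ ℂ}
    (h : Disjoint p.support q.support) :
    wt ν (p + q) = min (wt ν p) (wt ν q) := by
  classical
  have hsupp : (p + q).support = p.support ∪ q.support := Finsupp.support_add_eq h
  rw [wt, wt, wt, hsupp, Finset.inf_union]

lemma wt_rename {σ τ : Type*} (ν : σ → ℚ) (μ : τ → ℚ) (e : τ → σ) (he : Function.Injective e)
    (hν : ∀ j, ν (e j) = μ j) (q : MvPolynomial τ ℂ) :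
    wt ν (MvPolynomial.rename e q) = wt μ q := by
  classical
  rw [wt, wt, MvPolynomial.support_rename_of_injective he, Finset.inf_image]
  apply Finset.inf_congr rfl
  intro α _
  simp only [Function.comp_apply]
  congr 1
  rw [Finsupp.mapDomain_support_of_injective he, Finset.sum_image (fun a _ b _ h => he h)]
  apply Finset.sum_congr rfl
  intro i _
  rw [Finsupp.mapDomain_apply he, hν]

lemma prod_X_eq_monomial {σ ι : Type*} [DecidableEq σ] (s : Finset ι) (e : ι → σ) :
    ∏ i ∈ s, (MvPolynomial.X (e i) : MvPolynomial σ ℂ)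
      = MvPolynomial.monomial (∑ i ∈ s, Finsupp.single (e i) 1) 1 := by
  classical
  induction s using Finset.cons_induction with
  | empty => simp
  | cons a s ha ih =>
      rw [Finset.prod_cons, Finset.sum_cons, ih, MvPolynomial.X, MvPolynomial.monomial_mul,
        one_mul]

lemma aeval_smul_of_isHomogeneous {σ τ : Type*} (c : ℂ) {f : MvPolynomial σ ℂ} {d : ℕ}
    (hf : f.IsHomogeneous d) (φ : σ → MvPolynomial τ ℂ) :
    MvPolynomial.aeval (fun j => c • φ j) f = c ^ d • MvPolynomial.aeval φ f := by
  classical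
  conv_lhs => rw [← f.support_sum_monomial_coeff]
  conv_rhs => rw [← f.support_sum_monomial_coeff]
  rw [map_sum, map_sum, Finset.smul_sum]
  apply Finset.sum_congr rfl
  intro α hα
  rw [MvPolynomial.aeval_monomial, MvPolynomial.aeval_monomial]
  have hdeg : ∑ j ∈ α.support, α j = d := by
    have := hf (MvPolynomial.mem_support_iff.mp hα)
    simpa [Finsupp.weight_apply, Finsupp.sum] using this
  simp only [Finsupp.prod]
  simp_rw [smul_pow, MvPolynomial.smul_eq_C_mul, Finset.prod_mul_distrib, ← map_prod,
    Finset.prod_pow_eq_pow_sum, hdeg, mul_left_comm]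

lemma key_ineq (d m : ℕ) (hd : 1 ≤ d) (A B : ℚ) :
    min A ((d : ℚ) / (m + 2) * B) ≤ (d : ℚ) / (m + d + 2) * (A + B) := by
  have hm2 : (0:ℚ) < (m:ℚ) + 2 := by positivity
  have hmd : (0:ℚ) < (m:ℚ) + (d:ℚ) + 2 := by positivity
  have hd0 : (0:ℚ) ≤ (d:ℚ) := by positivity
  rcases le_total A ((d:ℚ)/(m+2) * B) with h | h
  · rw [min_eq_left h, div_mul_eq_mul_div, le_div_iff₀ hmd]
    rw [div_mul_eq_mul_div, le_div_iff₀ hm2] at h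
    nlinarith
  · rw [min_eq_right h, div_mul_eq_mul_div, div_mul_eq_mul_div, div_le_div_iff₀ hm2 hmd]
    rw [div_mul_eq_mul_div, div_le_iff₀ hm2] at h
    nlinarith [mul_le_mul_of_nonneg_left h hd0]

theorem stmt_15 (d m : ℕ) (hd : 1 ≤ d)
    (f : MvPolynomial (Fin (m + 2)) ℂ) (hf : f.IsHomogeneous d)
    (hss : ∀ (v : Fin (m + 2) → ℚ) (g : Matrix.SpecialLinearGroup (Fin (m + 2)) ℂ),
      wt v (MvPolynomial.aeval
          (fun j : Fin (m + 2) =>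
            ∑ k, (g : Matrix (Fin (m + 2)) (Fin (m + 2)) ℂ) j k • MvPolynomial.X k) f)
        ≤ (((d : ℚ) / (m + 2) * ∑ j, v j : ℚ) : WithTop ℚ))
    (w : Fin d → ℚ) (v : Fin (m + 2) → ℚ)
    (Λ : Fin d → ℂˣ) (g : GL (Fin (m + 2)) ℂ)
    (hdet : (∏ i, (Λ i : ℂ)) * (g : Matrix (Fin (m + 2)) (Fin (m + 2)) ℂ).det = 1) :
    wt (Sum.elim w v)
        (MvPolynomial.aeval
          (Sum.elim
            (fun i : Fin d => (Λ i : ℂ) • MvPolynomial.X (Sum.inl i))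
            (fun j : Fin (m + 2) =>
              ∑ k, (g : Matrix (Fin (m + 2)) (Fin (m + 2)) ℂ) j k
                • MvPolynomial.X (Sum.inr k)))
          ((∏ i : Fin d, MvPolynomial.X (Sum.inl i))
            + MvPolynomial.rename Sum.inr f))
      = min ((((∑ i, w i : ℚ)) : WithTop ℚ))
          (wt v (MvPolynomial.aeval
            (fun j : Fin (m + 2) =>
              ∑ k, (g : Matrix (Fin (m + 2)) (Fin (m + 2)) ℂ) j k • MvPolynomial.X k) f)) ∧
    wt (Sum.elim w v)
        (MvPolynomial.aeval
          (Sum.elim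
            (fun i : Fin d => (Λ i : ℂ) • MvPolynomial.X (Sum.inl i))
            (fun j : Fin (m + 2) =>
              ∑ k, (g : Matrix (Fin (m + 2)) (Fin (m + 2)) ℂ) j k
                • MvPolynomial.X (Sum.inr k)))
          ((∏ i : Fin d, MvPolynomial.X (Sum.inl i))
            + MvPolynomial.rename Sum.inr f))
      ≤ (((d : ℚ) / (m + d + 2) * ((∑ i, w i) + ∑ j, v j) : ℚ) : WithTop ℚ) := by
  classical
  set Φ : Fin d ⊕ Fin (m + 2) → MvPolynomial (Fin d ⊕ Fin (m + 2)) ℂ :=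
    Sum.elim
      (fun i : Fin d => (Λ i : ℂ) • MvPolynomial.X (Sum.inl i))
      (fun j : Fin (m + 2) =>
        ∑ k, (g : Matrix (Fin (m + 2)) (Fin (m + 2)) ℂ) j k • MvPolynomial.X (Sum.inr k))
    with hΦ
  set φg : Fin (m + 2) → MvPolynomial (Fin (m + 2)) ℂ :=
    fun j => ∑ k, (g : Matrix (Fin (m + 2)) (Fin (m + 2)) ℂ) j k • MvPolynomial.X k with hφg
  set P : MvPolynomial (Fin (m + 2)) ℂ := MvPolynomial.aeval φg f with hP
  set α₀ : (Fin d ⊕ Fin (m + 2)) →₀ ℕ :=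
    ∑ i : Fin d, Finsupp.single (Sum.inl i) 1 with hα₀
  have hΛne : (∏ i, (Λ i : ℂ)) ≠ 0 := by
    intro h
    rw [h, zero_mul] at hdet
    exact zero_ne_one hdet
  -- first summand
  have hA : MvPolynomial.aeval Φ (∏ i : Fin d,
        (MvPolynomial.X (Sum.inl i) : MvPolynomial (Fin d ⊕ Fin (m + 2)) ℂ))
      = (∏ i, (Λ i : ℂ)) • MvPolynomial.monomial α₀ 1 := by
    rw [map_prod (MvPolynomial.aeval (R := ℂ) Φ) (fun i : Fin d => MvPolynomial.X (Sum.inl i)) Finset.univ]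
    simp only [MvPolynomial.aeval_X, hΦ, Sum.elim_inl]
    simp_rw [MvPolynomial.smul_eq_C_mul]
    rw [Finset.prod_mul_distrib, ← map_prod, prod_X_eq_monomial, ← hα₀,
      ← MvPolynomial.smul_eq_C_mul]
  -- second summand
  have hB : MvPolynomial.aeval Φ (MvPolynomial.rename Sum.inr f)
      = MvPolynomial.rename Sum.inr P := by
    rw [MvPolynomial.aeval_rename, hP, MvPolynomial.comp_aeval_apply]
    have hfun : Φ ∘ Sum.inr
        = fun j => MvPolynomial.rename (Sum.inr : Fin (m+2) → Fin d ⊕ Fin (m+2)) (φg j) := by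
      funext j
      simp [hΦ, hφg, map_sum]
    rw [hfun]
  -- disjoint supports
  have hdisj : Disjoint ((∏ i, (Λ i : ℂ)) • MvPolynomial.monomial α₀ (1:ℂ)).support
      (MvPolynomial.rename Sum.inr P).support := by
    rw [MvPolynomial.support_smul_eq hΛne, MvPolynomial.support_monomial, if_neg one_ne_zero]
    rw [Finset.disjoint_singleton_left]
    intro hmem
    rw [MvPolynomial.support_rename_of_injective Sum.inr_injective, Finset.mem_image] at hmem
    obtain ⟨β, -, hβ⟩ := hmem
    have i0 : Fin d := ⟨0, hd⟩
    have h1 : α₀ (Sum.inl i0) = 1 := by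
      rw [hα₀, Finset.sum_apply']
      rw [Finset.sum_eq_single i0]
      · simp
      · intro b _ hb
        exact Finsupp.single_eq_of_ne' (by simp [hb])
      · simp
    have h2 : (Finsupp.mapDomain Sum.inr β) (Sum.inl i0) = 0 :=
      Finsupp.mapDomain_notin_range _ _ (by simp)
    rw [← hβ, h2] at h1
    exact zero_ne_one h1
  -- weight of the first summand
  have hwA : wt (Sum.elim w v) ((∏ i, (Λ i : ℂ)) • MvPolynomial.monomial α₀ (1:ℂ))
      = (((∑ i, w i : ℚ)) : WithTop ℚ) := by
    rw [wt_smul _ hΛne, wt_monomial _ _ (one_ne_zero)]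
    congr 1
    have : (∑ i ∈ α₀.support, Sum.elim w v i * (α₀ i : ℚ))
        = α₀.sum fun i n => Sum.elim w v i * (n : ℚ) := rfl
    rw [this, hα₀, ← Finsupp.sum_finset_sum_index (fun i => by simp)
      (fun i b₁ b₂ => by push_cast; ring)]
    simp [Finsupp.sum_single_index]
  -- weight of the second summand
  have hwB : wt (Sum.elim w v) (MvPolynomial.rename Sum.inr P) = wt v P :=
    wt_rename _ _ _ Sum.inr_injective (fun j => rfl) P
  have heq : wt (Sum.elim w v) (MvPolynomial.aeval Φ
        ((∏ i : Fin d, MvPolynomial.X (Sum.inl i)) + MvPolynomial.rename Sum.inr f))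
      = min ((((∑ i, w i : ℚ)) : WithTop ℚ)) (wt v P) := by
    rw [map_add, hA, hB, wt_add_of_disjoint _ hdisj, hwA, hwB]
  refine ⟨heq, ?_⟩
  rw [heq]
  -- semistability bound on wt v P
  have hdetne : (g : Matrix (Fin (m + 2)) (Fin (m + 2)) ℂ).det ≠ 0 := by
    intro h
    rw [h, mul_zero] at hdet
    exact zero_ne_one hdet
  obtain ⟨c, hc⟩ := IsAlgClosed.exists_pow_nat_eq
    ((g : Matrix (Fin (m + 2)) (Fin (m + 2)) ℂ).det)⁻¹ (n := m + 2) (by omega)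
  have hcne : c ≠ 0 := by
    intro h
    rw [h, zero_pow (by omega)] at hc
    exact (inv_ne_zero hdetne) hc.symm
  have hdet₀ : (c • (g : Matrix (Fin (m + 2)) (Fin (m + 2)) ℂ)).det = 1 := by
    rw [Matrix.det_smul, Fintype.card_fin, hc, inv_mul_cancel₀ hdetne]
  set g₀ : Matrix.SpecialLinearGroup (Fin (m + 2)) ℂ := ⟨_, hdet₀⟩ with hg₀
  have hsub : (fun j : Fin (m + 2) =>
        ∑ k, ((g₀ : Matrix (Fin (m + 2)) (Fin (m + 2)) ℂ)) j k • MvPolynomial.X k)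
      = fun j => c • φg j := by
    funext j
    rw [hφg, Finset.smul_sum]
    apply Finset.sum_congr rfl
    intro k _
    rw [hg₀]
    simp [Matrix.smul_apply, smul_smul]
  have hPbound : wt v P ≤ (((d : ℚ) / (m + 2) * ∑ j, v j : ℚ) : WithTop ℚ) := by
    have := hss v g₀
    rw [hsub, aeval_smul_of_isHomogeneous c hf φg, wt_smul _ (pow_ne_zero d hcne)] at this
    exact this
  calc min ((((∑ i, w i : ℚ)) : WithTop ℚ)) (wt v P)
      ≤ min ((((∑ i, w i : ℚ)) : WithTop ℚ))
          (((d : ℚ) / (m + 2) * ∑ j, v j : ℚ) : WithTop ℚ) :=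
        min_le_min le_rfl hPbound
    _ = (((min (∑ i, w i) ((d : ℚ) / (m + 2) * ∑ j, v j) : ℚ)) : WithTop ℚ) :=
        (WithTop.coe_min _ _).symm
    _ ≤ (((d : ℚ) / (m + d + 2) * ((∑ i, w i) + ∑ j, v j) : ℚ) : WithTop ℚ) := by
        exact_mod_cast WithTop.coe_le_coe.mpr (key_ineq d m hd _ _)
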